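/- Let X be a Banach space, p ∈ ℕ≥1 ∪ {∞}, and C₀ ≥ 1. Assume that every 1-Lipschitz function g : X → [0, 10] admits a C^p smooth, C₀-Lipschitz function h : X → [0, 10] with |g(x) − h(x)| ≤ 1/2 for all x ∈ X, such that h(x) = 0 whenever g(x) = 0 and h(x) = 10 whenever g(x) = 10. Then every 1-Lipschitz function g : X → [0, ∞) admits a C^p smooth, C₀-Lipschitz function h : X → [0, ∞) with |g(x) − h(x)| ≤ 1 for all x ∈ X and h(x) = 0 whenever g(x) = 0. -/

import Mathlib

/-- If on a Banach space `X` every `1`-Lipschitz `g : X → [0,10]` admits a `C^p` smooth,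
`C₀`-Lipschitz `1/2`-approximation into `[0,10]` preserving the level sets `{g = 0}` and
`{g = 10}`, then every `1`-Lipschitz `g : X → [0,∞)` admits a `C^p` smooth,
`C₀`-Lipschitz `1`-approximation `h : X → [0,∞)` vanishing where `g` vanishes. -/
theorem approx_unbounded_above (X : Type*) [NormedAddCommGroup X] [NormedSpace ℝ X]
    [CompleteSpace X] (p : ℕ∞) (hp : 1 ≤ p) (C₀ : ℝ) (hC₀ : 1 ≤ C₀)
    (H : ∀ g : X → ℝ, (∀ x y : X, |g x - g y| ≤ ‖x - y‖) →
      (∀ x, g x ∈ Set.Icc (0 : ℝ) 10) →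
      ∃ h : X → ℝ, ContDiff ℝ p h ∧ (∀ x y : X, |h x - h y| ≤ C₀ * ‖x - y‖) ∧
        (∀ x, h x ∈ Set.Icc (0 : ℝ) 10) ∧
        (∀ x, |g x - h x| ≤ 1 / 2) ∧
        (∀ x, g x = 0 → h x = 0) ∧
        (∀ x, g x = 10 → h x = 10)) :
    ∀ g : X → ℝ, (∀ x y : X, |g x - g y| ≤ ‖x - y‖) → (∀ x, 0 ≤ g x) →
      ∃ h : X → ℝ, ContDiff ℝ p h ∧ (∀ x y : X, |h x - h y| ≤ C₀ * ‖x - y‖) ∧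
        (∀ x, 0 ≤ h x) ∧
        (∀ x, |g x - h x| ≤ 1) ∧
        (∀ x, g x = 0 → h x = 0) := by
  intro g hg hg0
  have hC₀0 : (0:ℝ) ≤ C₀ := le_trans zero_le_one hC₀
  -- continuity of g
  have hgc : Continuous g := by
    have : LipschitzWith 1 g := by
      refine LipschitzWith.of_dist_le_mul fun x y => ?_
      simpa [Real.dist_eq, dist_eq_norm] using hg x y
    exact this.continuous
  -- the clamped family
  set G : ℕ → X → ℝ := fun n x => min (max (g x - 10 * n) 0) 10 with hGdef
  have hGlip : ∀ n, ∀ x y : X, |G n x - G n y| ≤ ‖x - y‖ := by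
    intro n x y
    have h1 : |G n x - G n y| ≤ |max (g x - 10 * n) 0 - max (g y - 10 * n) 0| := by
      simpa using (abs_min_sub_min_le_max (max (g x - 10 * n) 0) 10
        (max (g y - 10 * n) 0) 10)
    have h2 : |max (g x - 10 * n) 0 - max (g y - 10 * n) 0|
        ≤ |(g x - 10 * n) - (g y - 10 * n)| := by
      simpa using (abs_max_sub_max_le_max (g x - 10 * n) 0 (g y - 10 * n) 0)
    have h3 : |(g x - 10 * n) - (g y - 10 * n)| = |g x - g y| := by ring_nf
    exact h1.trans (h2.trans (h3.le.trans (hg x y)))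
  have hGmem : ∀ n, ∀ x, G n x ∈ Set.Icc (0:ℝ) 10 := by
    intro n x
    constructor
    · exact le_min (le_max_right _ _) (by norm_num)
    · exact min_le_right _ _
  choose f hfs hfl hfm hfa hf0 hf10 using fun n => H (G n) (hGlip n) (hGmem n)
  -- basic facts about f
  have hflip : ∀ n, LipschitzWith C₀.toNNReal (f n) := by
    intro n
    refine LipschitzWith.of_dist_le_mul fun x y => ?_
    simpa [Real.dist_eq, dist_eq_norm, Real.coe_toNNReal C₀ hC₀0] using hfl n x y
  have hfzero : ∀ (n : ℕ) (x : X), g x ≤ 10 * (n:ℝ) → f n x = 0 := by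
    intro n x hx
    refine hf0 n x ?_
    simp only [hGdef]
    rw [max_eq_right (by linarith), min_eq_left (by norm_num)]
  have hften : ∀ (n : ℕ) (x : X), 10 * (n:ℝ) + 10 ≤ g x → f n x = 10 := by
    intro n x hx
    refine hf10 n x ?_
    simp only [hGdef]
    rw [max_eq_left (by linarith), min_eq_right (by linarith)]
  -- the index function
  set N : X → ℕ := fun x => ⌊g x / 10⌋₊ with hNdef
  have hNle : ∀ x, 10 * (N x : ℝ) ≤ g x := by
    intro x
    have := Nat.floor_le (div_nonneg (hg0 x) (by norm_num : (0:ℝ) ≤ 10))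
    rw [hNdef]; linarith [this]
  have hNlt : ∀ x, g x < 10 * (N x : ℝ) + 10 := by
    intro x
    have := Nat.lt_floor_add_one (g x / 10)
    rw [hNdef]; nlinarith [this]
  have hNeq : ∀ (n : ℕ) (x : X), 10 * (n:ℝ) ≤ g x → g x < 10 * n + 10 → N x = n := by
    intro n x h1 h2
    rw [hNdef]
    rw [Nat.floor_eq_iff (div_nonneg (hg0 x) (by norm_num : (0:ℝ) ≤ 10))]
    constructor
    · linarith
    · linarith
  -- the glued function
  set h : X → ℝ := fun x => 10 * (N x : ℝ) + f (N x) x with hhdef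
  -- local representations
  have rep0 : ∀ y : X, g y < 10 → h y = f 0 y := by
    intro y hy
    have : N y = 0 := hNeq 0 y (by simpa using hg0 y) (by norm_num; linarith)
    simp [hhdef, this]
  have repInt : ∀ (n : ℕ) (y : X), 10 * (n:ℝ) ≤ g y → g y < 10 * n + 10 →
      h y = 10 * n + f n y := by
    intro n y h1 h2
    have : N y = n := hNeq n y h1 h2
    simp [hhdef, this]
  have repBd : ∀ (n : ℕ) (y : X), 10 * (n:ℝ) < g y → g y < 10 * (n:ℝ) + 20 →
      h y = 10 * n + f n y + f (n + 1) y := by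
    intro n y h1 h2
    rcases lt_or_ge (g y) (10 * (n:ℝ) + 10) with hc | hc
    · have hrep := repInt n y h1.le hc
      have : f (n + 1) y = 0 := hfzero (n + 1) y (by push_cast; linarith)
      rw [hrep, this, add_zero]
    · have hrep := repInt (n + 1) y (by push_cast; linarith) (by push_cast; linarith)
      have : f n y = 10 := hften n y (by linarith)
      rw [hrep, this]; push_cast; ring
  have hp' : (1 : WithTop ℕ∞) ≤ (p : WithTop ℕ∞) := by exact_mod_cast hp
  -- smoothness
  have hsmooth : ContDiff ℝ p h := by
    rw [contDiff_iff_contDiffAt]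
    intro x
    rcases lt_or_ge (g x) 10 with hx | hx
    · refine (hfs 0).contDiffAt.congr_of_eventuallyEq ?_
      have hmem : {y : X | g y < 10} ∈ nhds x :=
        (isOpen_lt hgc continuous_const).mem_nhds hx
      exact Filter.eventuallyEq_of_mem hmem fun y hy => rep0 y hy
    · have hN1 : 1 ≤ N x := by
        by_contra hc
        push_neg at hc
        interval_cases hI : N x
        · have := hNlt x; rw [hI] at this; push_cast at this; linarith
      rcases eq_or_lt_of_le (hNle x) with hb | hb
      · obtain ⟨m, hm⟩ : ∃ m, N x = m + 1 := ⟨N x - 1, by omega⟩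
        have hgx : g x = 10 * (m:ℝ) + 10 := by rw [← hb, hm]; push_cast; ring
        have hmodel : ContDiffAt ℝ p (fun y => 10 * (m:ℝ) + f m y + f (m + 1) y) x :=
          ((contDiff_const.add (hfs m)).add (hfs (m + 1))).contDiffAt
        refine hmodel.congr_of_eventuallyEq ?_
        have hmem : {y : X | 10 * (m:ℝ) < g y ∧ g y < 10 * (m:ℝ) + 20} ∈ nhds x := by
          refine ((isOpen_lt continuous_const hgc).inter
            (isOpen_lt hgc continuous_const)).mem_nhds ?_
          refine ⟨?_, ?_⟩ <;> · simp only [Set.mem_setOf_eq]; rw [hgx]; linarith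
        exact Filter.eventuallyEq_of_mem hmem fun y hy => repBd m y hy.1 hy.2
      · have hmodel : ContDiffAt ℝ p (fun y => 10 * ((N x : ℕ):ℝ) + f (N x) y) x :=
          (contDiff_const.add (hfs (N x))).contDiffAt
        refine hmodel.congr_of_eventuallyEq ?_
        have hmem : {y : X | 10 * ((N x : ℕ):ℝ) < g y ∧ g y < 10 * ((N x : ℕ):ℝ) + 10}
            ∈ nhds x :=
          ((isOpen_lt continuous_const hgc).inter
            (isOpen_lt hgc continuous_const)).mem_nhds ⟨hb, hNlt x⟩
        exact Filter.eventuallyEq_of_mem hmem fun y hy => repInt (N x) y hy.1.le hy.2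
  -- differentiability
  have hdiff : Differentiable ℝ h := hsmooth.differentiable (zero_lt_one.trans_le hp').ne'
  have hfdiff : ∀ n, Differentiable ℝ (f n) := fun n => (hfs n).differentiable (zero_lt_one.trans_le hp').ne'
  -- derivative bound
  have hbound : ∀ z : X, ‖fderiv ℝ h z‖ ≤ C₀ := by
    intro z
    have hfb : ∀ n, ‖fderiv ℝ (f n) z‖ ≤ C₀ := by
      intro n
      have := norm_fderiv_le_of_lipschitz ℝ (hflip n) (x₀ := z)
      rwa [Real.coe_toNNReal C₀ hC₀0] at this
    rcases lt_or_ge (g z) 10 with hz | hz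
    · have hmem : {y : X | g y < 10} ∈ nhds z :=
        (isOpen_lt hgc continuous_const).mem_nhds hz
      have heq : h =ᶠ[nhds z] f 0 :=
        Filter.eventuallyEq_of_mem hmem fun y hy => rep0 y hy
      rw [heq.fderiv_eq]
      exact hfb 0
    · have hN1 : 1 ≤ N z := by
        by_contra hc
        push_neg at hc
        interval_cases hI : N z
        · have := hNlt z; rw [hI] at this; push_cast at this; linarith
      rcases eq_or_lt_of_le (hNle z) with hb | hb
      · obtain ⟨m, hm⟩ : ∃ m, N z = m + 1 := ⟨N z - 1, by omega⟩
        have hgz : g z = 10 * (m:ℝ) + 10 := by rw [← hb, hm]; push_cast; ring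
        have hmem : {y : X | 10 * (m:ℝ) < g y ∧ g y < 10 * (m:ℝ) + 20} ∈ nhds z := by
          refine ((isOpen_lt continuous_const hgc).inter
            (isOpen_lt hgc continuous_const)).mem_nhds ?_
          refine ⟨?_, ?_⟩ <;> · simp only [Set.mem_setOf_eq]; rw [hgz]; linarith
        have heq : h =ᶠ[nhds z] fun y => 10 * (m:ℝ) + (f m y + f (m + 1) y) :=
          Filter.eventuallyEq_of_mem hmem fun y hy => by
            rw [repBd m y hy.1 hy.2]; ring
        rw [heq.fderiv_eq]
        have hmax : IsLocalMax (f m) z := by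
          have hfz : f m z = 10 := hften m z (by rw [hgz])
          refine Filter.Eventually.of_forall fun y => ?_
          rw [hfz]; exact (hfm m y).2
        have hmin : IsLocalMin (f (m + 1)) z := by
          have hfz : f (m + 1) z = 0 := hfzero (m + 1) z (by rw [hgz]; push_cast; linarith)
          refine Filter.Eventually.of_forall fun y => ?_
          rw [hfz]; exact (hfm (m + 1) y).1
        rw [fderiv_const_add, fderiv_fun_add ((hfdiff m) z) ((hfdiff (m+1)) z),
          hmax.fderiv_eq_zero, hmin.fderiv_eq_zero]
        simpa using hC₀0
      · have hmem : {y : X | 10 * ((N z : ℕ):ℝ) < g y ∧ g y < 10 * ((N z : ℕ):ℝ) + 10}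
            ∈ nhds z :=
          ((isOpen_lt continuous_const hgc).inter
            (isOpen_lt hgc continuous_const)).mem_nhds ⟨hb, hNlt z⟩
        have heq : h =ᶠ[nhds z] fun y => 10 * ((N z : ℕ):ℝ) + f (N z) y :=
          Filter.eventuallyEq_of_mem hmem fun y hy => repInt (N z) y hy.1.le hy.2
        rw [heq.fderiv_eq, fderiv_const_add]
        exact hfb (N z)
  -- conclusion
  refine ⟨h, hsmooth, ?_, ?_, ?_, ?_⟩
  · intro x y
    have := Convex.norm_image_sub_le_of_norm_fderiv_le
      (f := h) (C := C₀) (s := Set.univ)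
      (fun z _ => (hdiff z)) (fun z _ => hbound z) convex_univ
      (Set.mem_univ y) (Set.mem_univ x)
    simpa [Real.norm_eq_abs] using this
  · intro x
    have h1 : (0:ℝ) ≤ 10 * ((N x : ℕ):ℝ) := by positivity
    have h2 := (hfm (N x) x).1
    show (0:ℝ) ≤ 10 * ((N x : ℕ):ℝ) + f (N x) x
    linarith
  · intro x
    have h1 := hNle x
    have h2 := hNlt x
    have hGeq : G (N x) x = g x - 10 * ((N x : ℕ):ℝ) := by
      simp only [hGdef]
      rw [max_eq_left (by linarith), min_eq_left (by linarith)]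
    have happ := hfa (N x) x
    rw [hGeq] at happ
    have key : |g x - h x| ≤ 1 / 2 := by
      show |g x - (10 * ((N x : ℕ):ℝ) + f (N x) x)| ≤ 1 / 2
      have heq : g x - (10 * ((N x : ℕ):ℝ) + f (N x) x)
          = (g x - 10 * ((N x : ℕ):ℝ)) - f (N x) x := by ring
      rw [heq]
      exact happ
    linarith
  · intro x hx
    have hN0 : N x = 0 := hNeq 0 x (by rw [hx]; norm_num) (by rw [hx]; norm_num)
    have hf00 : f 0 x = 0 := hfzero 0 x (by rw [hx]; norm_num)
    show 10 * ((N x : ℕ):ℝ) + f (N x) x = 0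
    rw [hN0, hf00]
    norm_num
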